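/- (Closed formula, B_n) Let λ be a rigid B_n partition with length l, so l is odd; let M = (l+1)/2, and let (α_1, …, α_M; β_1, …, β_{M−1}) be the symbol of λ in the B_n theory. Then for every 1 ≤ p ≤ M: α_{M+1−p} = #{ i : 1 ≤ i ≤ λ_1, and either (λ^T_i is odd, i is even, and (λ^T_i + 1)/2 ≥ p) or (λ^T_i is even, i is odd, and λ^T_i/2 ≥ p) }; and for every 1 ≤ p ≤ M−1: β_{M−p} = #{ i : 1 ≤ i ≤ λ_1, and either (λ^T_i is even, i is even, and λ^T_i/2 ≥ p) or (λ^T_i is odd, i is odd, and (λ^T_i − 1)/2 ≥ p) }. -/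

import Mathlib

/-- `svals μ` lists the numbers `s_k = l - k + μ_k` (`1 ≤ k ≤ l`, `l` the
length of `μ`), computed with 0-based indices: entry `k` is `(l - 1 - k) + μ_k`.
For weakly decreasing `μ` this list is strictly decreasing. -/
def svals (μ : List ℕ) : List ℕ :=
  μ.mapIdx (fun k a => (μ.length - 1 - k) + a)

/-- The odd values `2f_1+1 < … < 2f_M+1` of `svals μ`, in increasing order. -/
def oddVals (μ : List ℕ) : List ℕ :=
  ((svals μ).filter (fun x => decide (x % 2 = 1))).reverse

/-- The even values `2g_1 < … < 2g_{M'}` of `svals μ`, in increasing order. -/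
def evenVals (μ : List ℕ) : List ℕ :=
  ((svals μ).filter (fun x => decide (x % 2 = 0))).reverse

/-- The top row of the symbol of `μ`: `α_i = f_i - i + 1` where
`2f_i + 1` is the `i`-th smallest odd value of `svals μ` (0-based entry `i`
is `α_{i+1} = f_{i+1} - i`). -/
def topRow (μ : List ℕ) : List ℕ :=
  (oddVals μ).mapIdx (fun i v => (v - 1) / 2 - i)

/-- The bottom row of the symbol of `μ`: `β_i = g_i - i + 1` where `2g_i` is
the `i`-th smallest even value of `svals μ`. -/
def botRow (μ : List ℕ) : List ℕ :=
  (evenVals μ).mapIdx (fun i v => v / 2 - i)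

/-- The row `λ^T_i` of the transposed Young diagram: the number of parts
of `lam` that are `≥ i`. -/
def transposeRow (lam : List ℕ) (i : ℕ) : ℕ :=
  lam.countP (fun a => decide (i ≤ a))

lemma svals_length (μ : List ℕ) : (svals μ).length = μ.length := by
  simp [svals]

lemma svals_getElem (μ : List ℕ) (k : ℕ) (h : k < (svals μ).length) :
    (svals μ)[k] = μ.length - 1 - k + μ[k]'(by simpa [svals_length] using h) := by
  simp [svals, List.getElem_mapIdx]


lemma aux_countP_split (L : List ℕ) (r x y : ℕ) (hxy : x ≤ y) :
    L.countP (fun s => decide (s % 2 = r ∧ x ≤ s)) =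
      L.countP (fun s => decide (s % 2 = r ∧ y ≤ s)) +
      L.countP (fun s => decide (s % 2 = r ∧ x ≤ s ∧ s < y)) := by
  induction L with
  | nil => simp
  | cons a t ih =>
    simp only [List.countP_cons, decide_eq_true_eq, ih]
    split_ifs <;> omega

lemma aux_countP_sum (p : ℕ → Bool) (L : List ℕ) :
    L.countP p = ∑ k ∈ Finset.range L.length, if p (L.getD k 0) then 1 else 0 := by
  induction L with
  | nil => simp
  | cons a t ih =>
    rw [List.countP_cons, List.length_cons, Finset.sum_range_succ']
    simp only [List.getD_cons_succ, List.getD_cons_zero, ← ih]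

lemma aux_parity_Ico (a b c : ℕ) (hc : c ≤ 1) :
    ((Finset.Ico a b).filter (fun k => k % 2 = c)).card = (b + 1 - c) / 2 - (a + 1 - c) / 2 := by
  induction b with
  | zero => simp; omega
  | succ b ih =>
    rcases le_or_gt a b with h | h
    · rw [Nat.Ico_succ_right_eq_insert_Ico h, Finset.filter_insert]
      by_cases hb : b % 2 = c
      · rw [if_pos hb, Finset.card_insert_of_notMem (by simp)]
        omega
      · rw [if_neg hb]; omega
    · rw [Finset.Ico_eq_empty (by omega)]
      simp; omega

lemma aux_sorted_countP {L : List ℕ} (h : List.Pairwise (· ≥ ·) L) (x j : ℕ)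
    (hj : j < L.length) : x ≤ L[j] ↔ j < L.countP (fun y => decide (x ≤ y)) := by
  induction L generalizing j with
  | nil => simp at hj
  | cons a t ih =>
    rw [List.pairwise_cons] at h
    obtain ⟨ha, ht⟩ := h
    rw [List.countP_cons]
    cases j with
    | zero =>
      simp only [List.getElem_cons_zero]
      constructor
      · intro hxa; simp [hxa]
      · intro hlt
        by_contra hxa
        have h0 : t.countP (fun y => decide (x ≤ y)) = 0 := by
          rw [List.countP_eq_zero]
          intro b hb
          have := ha b hb
          simp only [decide_eq_true_eq]
          omega
        simp [h0, hxa] at hlt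
    | succ j =>
      have hj' : j < t.length := by simpa using hj
      rw [List.getElem_cons_succ, ih ht j hj']
      have hle : t[j] ≤ a := ha t[j] (List.getElem_mem hj')
      constructor
      · intro hlt
        have hxt : x ≤ t[j] := (ih ht j hj').mpr hlt
        have hxa : x ≤ a := le_trans hxt hle
        rw [if_pos (by simp [hxa])]
        omega
      · intro hlt
        have : (if decide (x ≤ a) = true then 1 else 0) ≤ 1 := by split <;> omega
        omega

lemma aux_count_T (L : List ℕ) (i : ℕ) :
    L.countP (fun a => decide (i ≤ a)) = L.countP (fun a => decide (i + 1 ≤ a)) + L.count i := by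
  induction L with
  | nil => simp
  | cons a t ih =>
    rw [List.count_cons]
    simp only [List.countP_cons, decide_eq_true_eq, ih]
    by_cases hai : a = i
    · simp [hai]; omega
    · have hia : ¬ (i = a) := fun h => hai h.symm
      simp only [hai, hia, if_false, beq_iff_eq]
      split_ifs <;> omega

lemma aux_toFinset_count (L : List ℕ) (hN : L.Nodup) (m : ℕ) (Q : ℕ → Prop) [DecidablePred Q] :
    ((Finset.range m).filter (fun y => Q y ∧ y ∈ L)).card =
      L.countP (fun s => decide (Q s ∧ s < m)) := by
  classical
  have hnd : (L.filter (fun s => decide (Q s ∧ s < m))).Nodup := hN.filter _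
  rw [List.countP_eq_length_filter, ← List.toFinset_card_of_nodup hnd]
  congr 1
  ext y
  simp only [Finset.mem_filter, Finset.mem_range, List.mem_toFinset, List.mem_filter,
    decide_eq_true_eq]
  tauto

lemma svals_pairwise {lam : List ℕ} (hsort : lam.Pairwise (· ≥ ·)) :
    List.Pairwise (· > ·) (svals lam) := by
  rw [List.pairwise_iff_getElem]
  intro a b ha hb hab
  rw [svals_getElem _ _ ha, svals_getElem _ _ hb]
  have hs := List.pairwise_iff_getElem.mp hsort a b
    (by simpa [svals_length] using ha) (by simpa [svals_length] using hb) hab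
  have hb' : b < lam.length := by simpa [svals_length] using hb
  omega

lemma T_le (lam : List ℕ) (i : ℕ) : transposeRow lam i ≤ lam.length :=
  List.countP_le_length

lemma T_mono (lam : List ℕ) {i j : ℕ} (hij : i ≤ j) :
    transposeRow lam j ≤ transposeRow lam i := by
  apply List.countP_mono_left
  intro x _ hx
  simp only [decide_eq_true_eq] at *
  omega

lemma T_iff {lam : List ℕ} (hsort : lam.Pairwise (· ≥ ·)) (i k : ℕ) (hk : k < lam.length) :
    i ≤ lam[k] ↔ k < transposeRow lam i := by
  exact aux_sorted_countP hsort i k hk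

lemma T_one {lam : List ℕ} (hpos : ∀ x ∈ lam, 0 < x) : transposeRow lam 1 = lam.length := by
  rw [transposeRow, List.countP_eq_length]
  intro a ha
  simp only [decide_eq_true_eq]; exact hpos a ha

lemma aux_even_countP (L : List ℕ) (hBn : ∀ m, Even m → Even (L.count m)) :
    Even (L.countP (fun a => decide (a % 2 = 0))) := by
  classical
  rw [List.countP_eq_length_filter]
  set Lf := L.filter (fun a => decide (a % 2 = 0)) with hLf
  have hlen : Lf.length = ∑ a ∈ Lf.toFinset, Lf.count a := by
    have := Multiset.toFinset_sum_count_eq (Lf : Multiset ℕ)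
    simpa using this.symm
  rw [hlen]
  apply Finset.even_sum
  intro a ha
  rw [List.mem_toFinset, hLf, List.mem_filter] at ha
  have hae : a % 2 = 0 := by simpa using ha.2
  have : Lf.count a = L.count a := List.count_filter (by simpa using hae)
  rw [this]
  exact hBn a (Nat.even_iff.mpr hae)

lemma aux_sum_parity (L : List ℕ) :
    (L.sum + L.length + L.countP (fun a => decide (a % 2 = 0))) % 2 = 0 := by
  induction L with
  | nil => simp
  | cons a t ih =>
    simp only [List.sum_cons, List.length_cons, List.countP_cons]
    split_ifs with h <;> simp only [decide_eq_true_eq] at h <;> omega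

lemma key_F (lam : List ℕ) (r : ℕ)
    (hsort : lam.Pairwise (· ≥ ·)) (hpos : ∀ x ∈ lam, 0 < x)
    (hlodd : lam.length % 2 = 1)
    (hBn : ∀ m : ℕ, Even m → Even (lam.count m))
    (hr : r ≤ 1) :
    ∀ i : ℕ, 1 ≤ i →
      (svals lam).countP
        (fun s => decide (s % 2 = r ∧ lam.length + i - transposeRow lam i ≤ s))
        = (transposeRow lam i + r) / 2 := by
  have hl1 : 1 ≤ lam.length := by omega
  have hlam0 : ∀ k (hk : k < lam.length), lam[k] ≤ lam.getD 0 0 := by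
    intro k hk
    rw [List.getD_eq_getElem lam 0 (by omega)]
    rcases Nat.eq_zero_or_pos k with h0 | h0
    · subst h0; exact le_refl _
    · exact List.pairwise_iff_getElem.mp hsort 0 k (by omega) hk h0
  suffices H : ∀ j : ℕ, ∀ i : ℕ, 1 ≤ i → lam.getD 0 0 < i + j →
      (svals lam).countP
        (fun s => decide (s % 2 = r ∧ lam.length + i - transposeRow lam i ≤ s))
        = (transposeRow lam i + r) / 2 by
    intro i hi
    exact H (lam.getD 0 0) i hi (by omega)
  intro j
  induction j with
  | zero =>
    intro i hi hlt
    have hT0 : transposeRow lam i = 0 := by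
      rw [transposeRow, List.countP_eq_zero]
      intro a ha
      obtain ⟨k, hk, rfl⟩ := List.mem_iff_getElem.mp ha
      have := hlam0 k hk
      simp only [decide_eq_true_eq]
      omega
    rw [hT0]
    have hz : (svals lam).countP
        (fun s => decide (s % 2 = r ∧ lam.length + i - 0 ≤ s)) = 0 := by
      rw [List.countP_eq_zero]
      intro s hs
      obtain ⟨k, hk, rfl⟩ := List.mem_iff_getElem.mp hs
      rw [svals_getElem _ _ hk]
      have hk' : k < lam.length := by simpa [svals_length] using hk
      have := hlam0 k hk'
      simp only [decide_eq_true_eq]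
      omega
    rw [hz]
    omega
  | succ j ih =>
    intro i hi hlt
    by_cases hcase : lam.getD 0 0 < i + j
    · exact ih i hi hcase
    · have hih := ih (i + 1) (by omega) (by omega)
      set A := transposeRow lam i with hA
      set B := transposeRow lam (i + 1) with hB
      have hBA : B ≤ A := T_mono lam (by omega)
      have hAl : A ≤ lam.length := T_le lam i
      have hcnt : A = B + lam.count i := aux_count_T lam i
      have hev : i % 2 = 0 → lam.count i % 2 = 0 := by
        intro h
        exact Nat.even_iff.mp (hBn i (Nat.even_iff.mpr h))
      have hxy : lam.length + i - A ≤ lam.length + (i + 1) - B := by omega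
      rw [aux_countP_split (svals lam) r _ _ hxy, hih]
      -- now compute the middle term
      set c := (lam.length - 1 + i + r) % 2 with hc
      have hmid : (svals lam).countP
          (fun s => decide (s % 2 = r ∧ lam.length + i - A ≤ s ∧
            s < lam.length + (i + 1) - B)) =
          ((Finset.Ico B A).filter (fun k => k % 2 = c)).card := by
        rw [aux_countP_sum, svals_length, Finset.card_filter]
        rw [show (Finset.Ico B A) = (Finset.range lam.length).filter
            (fun k => B ≤ k ∧ k < A) by
          ext k
          simp only [Finset.mem_Ico, Finset.mem_filter, Finset.mem_range]
          omega]
        rw [Finset.sum_filter]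
        apply Finset.sum_congr rfl
        intro k hk
        have hk' : k < lam.length := Finset.mem_range.mp hk
        rw [List.getD_eq_getElem _ _ (by simpa [svals_length] using hk'),
          svals_getElem _ _ (by simpa [svals_length] using hk')]
        have h1 := T_iff hsort i k hk'
        have h2 := T_iff hsort (i + 1) k hk'
        rw [← hA] at h1
        rw [← hB] at h2
        simp only [decide_eq_true_eq]
        by_cases hP : (lam.length - 1 - k + lam[k]) % 2 = r ∧
            lam.length + i - A ≤ lam.length - 1 - k + lam[k] ∧
            lam.length - 1 - k + lam[k] < lam.length + (i + 1) - B
        · rw [if_pos hP]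
          have hQ : B ≤ k ∧ k < A := by omega
          have hQ2 : k % 2 = c := by omega
          rw [if_pos hQ, if_pos hQ2]
        · rw [if_neg hP]
          by_cases hQ : B ≤ k ∧ k < A
          · have hQ2 : ¬ (k % 2 = c) := by omega
            rw [if_pos hQ, if_neg hQ2]
          · rw [if_neg hQ]
      rw [hmid, aux_parity_Ico B A c (by omega)]
      omega

lemma Lr_length (lam : List ℕ) (r : ℕ)
    (hsort : lam.Pairwise (· ≥ ·)) (hpos : ∀ x ∈ lam, 0 < x)
    (hlodd : lam.length % 2 = 1)
    (hBn : ∀ m : ℕ, Even m → Even (lam.count m))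
    (hr : r ≤ 1) :
    ((svals lam).filter (fun x => decide (x % 2 = r))).length = (lam.length + r) / 2 := by
  have h1 := key_F lam r hsort hpos hlodd hBn hr 1 (le_refl 1)
  rw [T_one hpos] at h1
  rw [← List.countP_eq_length_filter]
  rw [← h1]
  apply List.countP_congr
  intro s hs
  obtain ⟨k, hk, rfl⟩ := List.mem_iff_getElem.mp hs
  rw [svals_getElem _ _ hk]
  have hk' : k < lam.length := by simpa [svals_length] using hk
  have hp : 0 < lam[k] := hpos _ (List.getElem_mem hk')
  simp only [decide_eq_true_eq]
  constructor <;> intro h <;> [exact ⟨h, by omega⟩; exact h.1] 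

lemma main_count (lam : List ℕ) (r p : ℕ)
    (hsort : lam.Pairwise (· ≥ ·)) (hpos : ∀ x ∈ lam, 0 < x)
    (hlodd : lam.length % 2 = 1)
    (hBn : ∀ m : ℕ, Even m → Even (lam.count m))
    (hr : r ≤ 1) (hp : 1 ≤ p) (hpM : p ≤ (lam.length + r) / 2) :
    (((svals lam).filter (fun x => decide (x % 2 = r))).reverse.getD
        ((lam.length + r) / 2 - p) 0) / 2 - ((lam.length + r) / 2 - p)
    = ((Finset.Icc 1 (lam.getD 0 0)).filter (fun i =>
        (i + transposeRow lam i) % 2 = r ∧ p ≤ (transposeRow lam i + r) / 2)).card := by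
  classical
  have hl1 : 1 ≤ lam.length := by omega
  set l := lam.length with hldef
  set Mr := (l + r) / 2 with hMr
  set Lr := (svals lam).filter (fun x => decide (x % 2 = r)) with hLr
  have hlen : Lr.length = Mr := Lr_length lam r hsort hpos hlodd hBn hr
  have hsv : List.Pairwise (· > ·) (svals lam) := svals_pairwise hsort
  have hLrsort : List.Pairwise (· > ·) Lr := hsv.filter _
  have hLrge : List.Pairwise (· ≥ ·) Lr := hLrsort.imp (fun h => le_of_lt h)
  have hidx : Mr - p < Lr.reverse.length := by
    rw [List.length_reverse, hlen]; omega
  have hp1 : p - 1 < Lr.length := by rw [hlen]; omega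
  have hV : Lr.reverse.getD (Mr - p) 0 = Lr[p-1] := by
    rw [List.getD_eq_getElem _ _ hidx, List.getElem_reverse]
    simp only [hlen]
    simp only [show Mr - 1 - (Mr - p) = p - 1 from by omega]
  set V := Lr[p-1] with hVdef
  have hVmem : V ∈ Lr := List.getElem_mem hp1
  rw [hLr, List.mem_filter, decide_eq_true_eq] at hVmem
  obtain ⟨hVsv, hVr⟩ := hVmem
  -- countP over Lr equals Fr over svals
  have hFr : ∀ x : ℕ, Lr.countP (fun y => decide (x ≤ y)) =
      (svals lam).countP (fun s => decide (s % 2 = r ∧ x ≤ s)) := by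
    intro x
    rw [hLr, List.countP_filter]
    apply List.countP_congr
    intro s _
    by_cases h1 : s % 2 = r <;> by_cases h2 : x ≤ s <;> simp [h1, h2]
  have hVF : (svals lam).countP (fun s => decide (s % 2 = r ∧ V ≤ s)) = p := by
    rw [← hFr]
    have hge : p - 1 < Lr.countP (fun y => decide (V ≤ y)) :=
      (aux_sorted_countP hLrge V (p-1) hp1).mp (le_refl _)
    have hle : Lr.countP (fun y => decide (V ≤ y)) ≤ p := by
      by_contra hcon
      push_neg at hcon
      have hplen : p < Lr.length := by
        have := List.countP_le_length (l := Lr) (p := fun y => decide (V ≤ y))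
        omega
      have := (aux_sorted_countP hLrge V p hplen).mpr (by omega)
      have hlt : Lr[p] < Lr[p-1] :=
        List.pairwise_iff_getElem.mp hLrsort (p-1) p hp1 hplen (by omega)
      omega
    omega
  have hiffV : ∀ x : ℕ, x ≤ V ↔
      p ≤ (svals lam).countP (fun s => decide (s % 2 = r ∧ x ≤ s)) := by
    intro x
    constructor
    · intro hx
      rw [← hVF]
      apply List.countP_mono_left
      intro s _ hs
      simp only [decide_eq_true_eq] at *
      omega
    · intro hx
      rw [← hFr] at hx
      exact (aux_sorted_countP hLrge x (p-1) hp1).mpr (by omega)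
  -- card of B
  set T := transposeRow lam with hT
  set B := (Finset.range V).filter (fun y => y % 2 = r ∧ ¬ (y ∈ svals lam)) with hBdef
  have hVl : V ≤ l - 1 + lam.getD 0 0 := by
    obtain ⟨k, hk, hkv⟩ := List.mem_iff_getElem.mp hVsv
    rw [svals_getElem _ _ hk] at hkv
    have hk' : k < l := by simpa [svals_length] using hk
    have hle := List.pairwise_iff_getElem.mp hsort 0 k (by omega) hk'
    rw [List.getD_eq_getElem lam 0 (by omega)]
    rcases Nat.eq_zero_or_pos k with h0 | h0
    · subst h0; omega
    · have := hle h0; omega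
  have htot : ((Finset.range V).filter (fun y => y % 2 = r)).card = V / 2 := by
    rw [Finset.range_eq_Ico, aux_parity_Ico 0 V r hr]
    omega
  have hbeads : ((Finset.range V).filter (fun y => y % 2 = r ∧ y ∈ svals lam)).card
      = Mr - p := by
    have hnd : (svals lam).Nodup := hsv.imp (fun h => Nat.ne_of_gt h)
    rw [aux_toFinset_count (svals lam) hnd V (fun y => y % 2 = r)]
    have hsplit := aux_countP_split (svals lam) r 0 V (by omega)
    have he1 : (svals lam).countP (fun s => decide (s % 2 = r ∧ 0 ≤ s)) = Mr := by
      rw [← hlen, hLr, ← List.countP_eq_length_filter]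
      apply List.countP_congr
      intro s _
      simp
    have he2 : (svals lam).countP (fun s => decide (s % 2 = r ∧ 0 ≤ s ∧ s < V)) =
        (svals lam).countP (fun s => decide (s % 2 = r ∧ s < V)) := by
      apply List.countP_congr
      intro s _
      simp
    rw [he1, hVF, he2] at hsplit
    omega
  have hBcard : B.card = V / 2 - (Mr - p) := by
    have hsplit := Finset.card_filter_add_card_filter_not
      (s := (Finset.range V).filter (fun y => y % 2 = r)) (p := fun y => y ∈ svals lam)
    rw [Finset.filter_filter, Finset.filter_filter] at hsplit
    rw [htot] at hsplit
    rw [hbeads] at hsplit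
    rw [hBdef]
    omega
  rw [hV]
  rw [hBcard.symm]
  apply Eq.symm
  -- bijection
  set lam1 := lam.getD 0 0 with hlam1
  have hlam1pos : 1 ≤ lam1 := by
    rw [hlam1, List.getD_eq_getElem lam 0 (by omega)]
    exact hpos _ (List.getElem_mem (by omega))
  have hlamle : ∀ k (hk : k < l), lam[k] ≤ lam1 := by
    intro k hk
    rw [hlam1, List.getD_eq_getElem lam 0 (by omega)]
    rcases Nat.eq_zero_or_pos k with h0 | h0
    · subst h0; exact le_refl _
    · exact List.pairwise_iff_getElem.mp hsort 0 k (by omega) hk h0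
  have hTle : ∀ i, T i ≤ l := fun i => T_le lam i
  have hkey : ∀ i, 1 ≤ i → (svals lam).countP
      (fun s => decide (s % 2 = r ∧ l + i - T i ≤ s)) = (T i + r) / 2 :=
    fun i hi => key_F lam r hsort hpos hlodd hBn hr i hi
  have hnotmem : ∀ i, 1 ≤ i → (l - 1 + i - T i) ∉ svals lam := by
    intro i hi hmem
    obtain ⟨k, hk, hkv⟩ := List.mem_iff_getElem.mp hmem
    have hk' : k < l := by simpa [svals_length] using hk
    rw [svals_getElem _ _ hk] at hkv
    have h1 := T_iff hsort i k hk'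
    rw [← hT] at h1
    have h2 := hTle i
    rcases le_or_gt i lam[k] with hik | hik
    · have := h1.mp hik; omega
    · have : ¬ (k < T i) := fun hc => by have := h1.mpr hc; omega
      omega
  apply Finset.card_bij (fun i _ => l - 1 + i - T i)
  · -- maps into B
    intro i hiA
    rw [Finset.mem_filter, Finset.mem_Icc] at hiA
    obtain ⟨⟨hi1, hile⟩, hpar, hthr⟩ := hiA
    rw [hBdef, Finset.mem_filter, Finset.mem_range]
    have hTi := hTle i
    refine ⟨?_, ?_, hnotmem i hi1⟩
    · -- < V
      have heq : l - 1 + i - T i + 1 = l + i - T i := by omega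
      have := (hiffV (l - 1 + i - T i + 1)).mpr (by rw [heq, hkey i hi1]; exact hthr)
      omega
    · omega
  · -- injective
    intro i1 h1 i2 h2 heq
    rw [Finset.mem_filter, Finset.mem_Icc] at h1 h2
    rcases lt_trichotomy i1 i2 with h | h | h
    · have := T_mono lam (le_of_lt h)
      have := hTle i1
      rw [← hT] at *
      omega
    · exact h
    · have := T_mono lam (le_of_lt h)
      have := hTle i2
      rw [← hT] at *
      omega
  · -- surjective
    intro y hy
    rw [hBdef, Finset.mem_filter, Finset.mem_range] at hy
    obtain ⟨hyV, hyr, hyns⟩ := hy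
    set P : ℕ → Prop := fun i => l - 1 + i - T i ≤ y with hPdef
    have hP1 : P 1 := by
      show l - 1 + 1 - T 1 ≤ y
      rw [hT, T_one hpos]
      omega
    set i0 := Nat.findGreatest P lam1 with hi0
    have hi0ge : 1 ≤ i0 := Nat.le_findGreatest hlam1pos hP1
    have hi0le : i0 ≤ lam1 := Nat.findGreatest_le lam1
    have hi0P : P i0 := Nat.findGreatest_spec hlam1pos hP1
    have hnext : y < l - 1 + (i0 + 1) - T (i0 + 1) := by
      by_cases hc : i0 + 1 ≤ lam1
      · have hng := Nat.findGreatest_is_greatest (P := P) (n := lam1)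
          (by omega) hc
        rw [hPdef] at hng
        simp only at hng
        have := hTle (i0 + 1)
        omega
      · have hi0eq : i0 = lam1 := by omega
        have hT0 : T (i0 + 1) = 0 := by
          rw [hT, transposeRow, List.countP_eq_zero]
          intro a ha
          obtain ⟨k, hk, rfl⟩ := List.mem_iff_getElem.mp ha
          have := hlamle k hk
          simp only [decide_eq_true_eq]
          omega
        rw [hT0]
        omega
    have hy0 : l - 1 + i0 - T i0 = y := by
      by_contra hne
      have hi0P' : l - 1 + i0 - T i0 ≤ y := hi0P
      have hTi0 := hTle i0
      have hTi01 := hTle (i0 + 1)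
      have hmono : T (i0 + 1) ≤ T i0 := T_mono lam (by omega)
      set k := l - 1 + i0 - y with hkdef
      have hk1 : T (i0 + 1) ≤ k := by omega
      have hk2 : k < T i0 := by omega
      have hkl : k < l := by omega
      have hgei := (T_iff hsort i0 k hkl).mpr (by rw [← hT]; omega)
      have hlti : ¬ (i0 + 1 ≤ lam[k]) := fun hc => by
        have := (T_iff hsort (i0 + 1) k hkl).mp hc
        rw [← hT] at this
        omega
      have hval : lam[k] = i0 := by omega
      have : (svals lam)[k]'(by simpa [svals_length] using hkl) = y := by
        rw [svals_getElem _ _ (by simpa [svals_length] using hkl), hval]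
        omega
      exact hyns (this ▸ List.getElem_mem (by simpa [svals_length] using hkl))
    refine ⟨i0, ?_, hy0⟩
    rw [Finset.mem_filter, Finset.mem_Icc]
    have hTi0 := hTle i0
    refine ⟨⟨hi0ge, hi0le⟩, by omega, ?_⟩
    have heq : y + 1 = l + i0 - T i0 := by omega
    have := (hiffV (y + 1)).mp (by omega)
    rw [heq, hkey i0 hi0ge] at this
    exact this

/-- **Closed formula for the symbol, `B_n` theory.**  For a rigid `B_n`
partition `lam` of `2n+1` with length `l` and `M = (l+1)/2`, the symbol
`(α_1, …, α_M; β_1, …, β_{M-1})` of `lam` satisfies, for `1 ≤ p ≤ M`: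
`α_{M+1-p}` equals the number of `1 ≤ i ≤ λ_1` for which either
(`λ^T_i` odd, `i` even, `(λ^T_i+1)/2 ≥ p`) or (`λ^T_i` even, `i` odd,
`λ^T_i/2 ≥ p`); and for `1 ≤ p ≤ M-1`: `β_{M-p}` equals the number of
`1 ≤ i ≤ λ_1` for which either (`λ^T_i` even, `i` even, `λ^T_i/2 ≥ p`) or
(`λ^T_i` odd, `i` odd, `(λ^T_i-1)/2 ≥ p`).  (1-based entry `α_q` is the
0-based entry `q - 1` of `topRow lam`, similarly for `β`.) -/
theorem closed_formula_Bn (n : ℕ) (lam : List ℕ) (M : ℕ)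
    (hsort : lam.Pairwise (· ≥ ·))
    (hpos : ∀ x ∈ lam, 0 < x)
    (hsum : lam.sum = 2 * n + 1)
    (hBn : ∀ m : ℕ, Even m → Even (lam.count m))
    (hgap : ∀ i : ℕ, i + 1 < lam.length → lam.getD i 0 ≤ lam.getD (i + 1) 0 + 1)
    (hrig : ∀ m : ℕ, Odd m → lam.count m ≠ 2)
    (hM : M = (lam.length + 1) / 2) :
    (∀ p : ℕ, 1 ≤ p → p ≤ M →
      (topRow lam).getD (M - p) 0 =
        ((Finset.Icc 1 (lam.getD 0 0)).filter (fun i =>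
          ((transposeRow lam i) % 2 = 1 ∧ i % 2 = 0 ∧
            p ≤ ((transposeRow lam i) + 1) / 2) ∨
          ((transposeRow lam i) % 2 = 0 ∧ i % 2 = 1 ∧
            p ≤ (transposeRow lam i) / 2))).card) ∧
    (∀ p : ℕ, 1 ≤ p → p ≤ M - 1 →
      (botRow lam).getD (M - 1 - p) 0 =
        ((Finset.Icc 1 (lam.getD 0 0)).filter (fun i =>
          ((transposeRow lam i) % 2 = 0 ∧ i % 2 = 0 ∧
            p ≤ (transposeRow lam i) / 2) ∨
          ((transposeRow lam i) % 2 = 1 ∧ i % 2 = 1 ∧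
            p ≤ ((transposeRow lam i) - 1) / 2))).card) := by
  classical
  have hne : lam ≠ [] := by
    intro h
    rw [h] at hsum
    simp at hsum
  have hl1 : 1 ≤ lam.length := List.length_pos_iff.mpr hne
  have hlodd : lam.length % 2 = 1 := by
    have h1 := aux_sum_parity lam
    have h2 := aux_even_countP lam hBn
    rw [Nat.even_iff] at h2
    omega
  constructor
  · intro p hp1 hpM
    have hpM' : p ≤ (lam.length + 1) / 2 := by omega
    have hlen : ((svals lam).filter (fun x => decide (x % 2 = 1))).length
        = (lam.length + 1) / 2 := Lr_length lam 1 hsort hpos hlodd hBn (by omega)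
    have hidx2 : M - p < (oddVals lam).length := by
      rw [oddVals, List.length_reverse, hlen]; omega
    have hidx : M - p < (topRow lam).length := by
      rw [topRow, List.length_mapIdx]; exact hidx2
    rw [List.getD_eq_getElem _ _ hidx]
    simp only [topRow, List.getElem_mapIdx]
    have hgd : (oddVals lam)[M - p] = (oddVals lam).getD (M - p) 0 :=
      (List.getD_eq_getElem _ _ hidx2).symm
    rw [hgd]
    set V := (oddVals lam).getD (M - p) 0 with hVdef
    have hVmem : V ∈ (svals lam).filter (fun x => decide (x % 2 = 1)) := by
      rw [hVdef, List.getD_eq_getElem _ _ hidx2]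
      have : (oddVals lam)[M - p] ∈ oddVals lam := List.getElem_mem hidx2
      exact List.mem_reverse.mp this
    have hVodd : V % 2 = 1 := by
      rw [List.mem_filter, decide_eq_true_eq] at hVmem
      exact hVmem.2
    have hmc := main_count lam 1 p hsort hpos hlodd hBn (by omega) hp1 hpM'
    rw [show ((svals lam).filter (fun x => decide (x % 2 = 1))).reverse = oddVals lam
      from rfl] at hmc
    rw [← hM, ← hVdef] at hmc
    have harith : (V - 1) / 2 - (M - p) = V / 2 - (M - p) := by omega
    rw [harith, hmc]
    apply congrArg Finset.card
    apply Finset.filter_congr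
    intro i _
    constructor
    · rintro ⟨h1, h2⟩
      omega
    · rintro (⟨h1, h2, h3⟩ | ⟨h1, h2, h3⟩) <;> constructor <;> omega
  · intro p hp1 hpM
    have hpM' : p ≤ (lam.length + 0) / 2 := by omega
    have hlen : ((svals lam).filter (fun x => decide (x % 2 = 0))).length
        = (lam.length + 0) / 2 := Lr_length lam 0 hsort hpos hlodd hBn (by omega)
    have hidx2 : M - 1 - p < (evenVals lam).length := by
      rw [evenVals, List.length_reverse, hlen]; omega
    have hidx : M - 1 - p < (botRow lam).length := by
      rw [botRow, List.length_mapIdx]; exact hidx2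
    rw [List.getD_eq_getElem _ _ hidx]
    simp only [botRow, List.getElem_mapIdx]
    have hgd : (evenVals lam)[M - 1 - p] = (evenVals lam).getD (M - 1 - p) 0 :=
      (List.getD_eq_getElem _ _ hidx2).symm
    rw [hgd]
    set V := (evenVals lam).getD (M - 1 - p) 0 with hVdef
    have hmc := main_count lam 0 p hsort hpos hlodd hBn (by omega) hp1 hpM'
    rw [show ((svals lam).filter (fun x => decide (x % 2 = 0))).reverse = evenVals lam
      from rfl] at hmc
    rw [show (lam.length + 0) / 2 - p = M - 1 - p from by omega, ← hVdef] at hmc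
    rw [hmc]
    apply congrArg Finset.card
    apply Finset.filter_congr
    intro i _
    constructor
    · rintro ⟨h1, h2⟩
      omega
    · rintro (⟨h1, h2, h3⟩ | ⟨h1, h2, h3⟩) <;> constructor <;> omega
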